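/- arXiv:1605.02995 — 4 statements merged into one kernel-verified Lean document; each statement's English description precedes it below -/
import Mathlib

section
/- Let M_0 = m_0, M_1, …, M_k be a martingale such that for each 1 ≤ i ≤ k, Var[M_i | M_{i-1},…,M_0] ≤ σ_i² and |M_i - M_{i-1}| ≤ m for some positive m. Then for any λ > 0, P[M_k - M_0 ≥ λ] ≤ exp(-λ²/(2(∑_{i=1}^k σ_i² + mλ/3))). -/
open MeasureTheory ProbabilityTheory Finset Real


lemma exp_le_quad_of_nonpos {y : ℝ} (hy : y ≤ 0) : Real.exp y ≤ 1 + y + y ^ 2 / 2 := by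
  have key : AntitoneOn (fun y : ℝ => 1 + y + y ^ 2 / 2 - Real.exp y) (Set.Iic 0) := by
    apply antitoneOn_of_deriv_nonpos (convex_Iic 0)
    · fun_prop
    · intro x hx
      exact ((((hasDerivAt_id x).const_add 1).add (((hasDerivAt_pow 2 x)).div_const 2)).sub
        (Real.hasDerivAt_exp x)).differentiableAt.differentiableWithinAt
    · intro x hx
      have hd : deriv (fun y : ℝ => 1 + y + y ^ 2 / 2 - Real.exp y) x
          = 1 + x - Real.exp x := by
        have h : HasDerivAt (fun y : ℝ => 1 + y + y ^ 2 / 2 - Real.exp y) _ x :=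
          ((((hasDerivAt_id x).const_add 1).add (((hasDerivAt_pow 2 x)).div_const 2)).sub
          (Real.hasDerivAt_exp x))
        simpa using h.deriv
      rw [hd]
      have := Real.add_one_le_exp x
      linarith
  have h0 := key (Set.mem_Iic.2 hy) (Set.mem_Iic.2 le_rfl) hy
  simp only [Real.exp_zero] at h0
  nlinarith [h0]

lemma cubic_ineq {y : ℝ} (hy : 0 ≤ y) :
    (3 - y) * (Real.exp y - 1 - y) ≤ 3 * y ^ 2 / 2 := by
  -- h2 y = (y-2) e^y + y + 2 ≥ 0 on [0,∞)
  have hd2 : ∀ x : ℝ, HasDerivAt (fun y : ℝ => (y - 2) * Real.exp y + y + 2)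
      ((x - 1) * Real.exp x + 1) x := by
    intro x
    have h1 : HasDerivAt (fun y : ℝ => (y - 2) * Real.exp y)
        (1 * Real.exp x + (x - 2) * Real.exp x) x :=
      (((hasDerivAt_id x).sub_const 2)).mul (Real.hasDerivAt_exp x)
    have := (h1.add_const 0)
    have h2 := (h1.add (hasDerivAt_id x)).add_const 2
    convert h2 using 1
    · rfl
    · rfl
    · rfl
    ring
  have h2nonneg : ∀ x : ℝ, 0 ≤ x → 0 ≤ (x - 2) * Real.exp x + x + 2 := by
    have key : MonotoneOn (fun y : ℝ => (y - 2) * Real.exp y + y + 2) (Set.Ici 0) := by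
      apply monotoneOn_of_deriv_nonneg (convex_Ici 0)
      · fun_prop
      · intro x hx; exact (hd2 x).differentiableAt.differentiableWithinAt
      · intro x hx
        rw [(hd2 x).deriv]
        rw [interior_Ici] at hx
        have hx0 : (0:ℝ) < x := hx
        have h1 : (1 - x) * Real.exp x ≤ 1 := by
          have ha := Real.add_one_le_exp (-x)
          have hb : Real.exp (-x) * Real.exp x = 1 := by
            rw [← Real.exp_add]; simp
          nlinarith [Real.exp_pos x]
        nlinarith
    intro x hx
    have := key (Set.mem_Ici.2 le_rfl) (Set.mem_Ici.2 hx) hx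
    simp only [Real.exp_zero] at this
    linarith
  -- h y = 3y²/2 - (3-y)(e^y-1-y), h' = h2
  have hd : ∀ x : ℝ, HasDerivAt (fun y : ℝ => 3 * y ^ 2 / 2 - (3 - y) * (Real.exp y - 1 - y))
      ((x - 2) * Real.exp x + x + 2) x := by
    intro x
    have h1 : HasDerivAt (fun y : ℝ => 3 * y ^ 2 / 2) (3 * x) x := by
      have := (hasDerivAt_pow 2 x).const_mul 3 |>.div_const 2
      convert this using 1
      · rfl
      · rfl
      ring
    have h2 : HasDerivAt (fun y : ℝ => (3 - y) * (Real.exp y - 1 - y))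
        ((-1) * (Real.exp x - 1 - x) + (3 - x) * (Real.exp x - 1)) x := by
      have ha : HasDerivAt (fun y : ℝ => 3 - y) (-1) x := by
        simpa using ((hasDerivAt_id x).const_sub 3)
      have hb : HasDerivAt (fun y : ℝ => Real.exp y - 1 - y) (Real.exp x - 1) x := by
        exact ((Real.hasDerivAt_exp x).sub_const 1).sub (hasDerivAt_id x)
      exact ha.mul hb
    have := h1.sub h2
    convert this using 1
    · rfl
    · rfl
    · rfl
    ring
  have key : MonotoneOn (fun y : ℝ => 3 * y ^ 2 / 2 - (3 - y) * (Real.exp y - 1 - y))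
      (Set.Ici 0) := by
    apply monotoneOn_of_deriv_nonneg (convex_Ici 0)
    · fun_prop
    · intro x hx; exact (hd x).differentiableAt.differentiableWithinAt
    · intro x hx
      rw [(hd x).deriv]
      rw [interior_Ici] at hx
      exact h2nonneg x hx.le
  have := key (Set.mem_Ici.2 le_rfl) (Set.mem_Ici.2 hy) hy
  simp only [Real.exp_zero] at this
  nlinarith [this]

lemma exp_le_quadratic {y b : ℝ} (hb0 : 0 < b) (hb3 : b < 3) (hyb : y ≤ b) :
    Real.exp y ≤ 1 + y + y ^ 2 / (2 * (1 - b / 3)) := by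
  have hden : 0 < 2 * (1 - b / 3) := by linarith
  rcases le_or_gt y 0 with hy | hy
  · have h1 := exp_le_quad_of_nonpos hy
    have h2 : y ^ 2 / 2 ≤ y ^ 2 / (2 * (1 - b / 3)) := by
      rw [div_le_div_iff₀ (by linarith) hden]
      nlinarith [sq_nonneg y]
    linarith
  · have hA := cubic_ineq hy.le
    have h3y : 0 < 3 - y := by linarith
    have h3b : 0 < 3 - b := by linarith
    have e1 : (Real.exp y - 1 - y) ≤ 3 * y ^ 2 / 2 / (3 - y) := by
      rw [le_div_iff₀ h3y]; nlinarith
    have e2 : 3 * y ^ 2 / 2 / (3 - y) ≤ 3 * y ^ 2 / 2 / (3 - b) := by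
      rw [div_le_div_iff₀ h3y h3b]
      nlinarith [sq_nonneg y]
    have e3 : y ^ 2 / (2 * (1 - b / 3)) = 3 * y ^ 2 / 2 / (3 - b) := by
      field_simp
    linarith

open MeasureTheory ProbabilityTheory Finset

lemma integrable_of_abs_bound {Ω : Type*} [MeasurableSpace Ω] {μ : Measure Ω}
    [IsFiniteMeasure μ] {f : Ω → ℝ} (hf : AEStronglyMeasurable f μ) (C : ℝ)
    (h : ∀ ω, |f ω| ≤ C) : Integrable f μ :=
  Integrable.mono' (integrable_const C) hf (Filter.Eventually.of_forall h)

lemma condexp_exp_step {Ω : Type*} [m0 : MeasurableSpace Ω] {μ : Measure Ω}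
    [IsProbabilityMeasure μ] (ℱ : Filtration ℕ m0) (M : ℕ → Ω → ℝ)
    (hmart : Martingale M ℱ μ) (n : ℕ) (σ2 m s : ℝ) (hm : 0 < m) (hs : 0 < s)
    (hsm : s * m < 3)
    (hvar : μ[fun ω => (M (n + 1) ω - M n ω) ^ 2|ℱ n] ≤ᵐ[μ] fun _ => σ2)
    (hdiff : ∀ ω, |M (n + 1) ω - M n ω| ≤ m) :
    μ[fun ω => Real.exp (s * (M (n + 1) ω - M n ω))|ℱ n] ≤ᵐ[μ]
      fun _ => Real.exp (s ^ 2 / (2 * (1 - s * m / 3)) * σ2) := by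
  set c : ℝ := s ^ 2 / (2 * (1 - s * m / 3)) with hc
  have hcpos : 0 < c := by
    apply div_pos (by positivity)
    nlinarith
  set X : Ω → ℝ := fun ω => M (n + 1) ω - M n ω with hX
  have hdiffX : ∀ ω, |X ω| ≤ m := hdiff
  have hXm : StronglyMeasurable X :=
    ((hmart.stronglyMeasurable (n + 1)).mono (ℱ.le _)).sub
      ((hmart.stronglyMeasurable n).mono (ℱ.le _))
  have hXint : Integrable X μ := integrable_of_abs_bound hXm.aestronglyMeasurable m hdiffX
  have hX2m : StronglyMeasurable (fun ω => X ω ^ 2) := hXm.pow 2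
  have hX2int : Integrable (fun ω => X ω ^ 2) μ := by
    apply integrable_of_abs_bound hX2m.aestronglyMeasurable (m ^ 2)
    intro ω
    rw [abs_pow]
    exact pow_le_pow_left₀ (abs_nonneg _) (hdiffX ω) 2
  have hexpint : Integrable (fun ω => Real.exp (s * X ω)) μ := by
    apply integrable_of_abs_bound (Real.continuous_exp.comp_stronglyMeasurable
      (hXm.const_mul s)).aestronglyMeasurable (Real.exp (s * m))
    intro ω
    rw [abs_of_pos (Real.exp_pos _), Real.exp_le_exp]
    have := (abs_le.1 (hdiffX ω)).2
    nlinarith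
  have hpt : ∀ ω, Real.exp (s * X ω) ≤ 1 + s * X ω + c * X ω ^ 2 := by
    intro ω
    have h1 : s * X ω ≤ s * m := by
      have := (abs_le.1 (hdiffX ω)).2
      nlinarith
    have h2 := exp_le_quadratic (by positivity) hsm h1
    have h3 : (s * X ω) ^ 2 / (2 * (1 - s * m / 3)) = c * X ω ^ 2 := by
      rw [hc]; ring
    rw [h3] at h2
    linarith
  have hcondX : μ[X|ℱ n] =ᵐ[μ] 0 := by
    have h1 : μ[M (n + 1)|ℱ n] =ᵐ[μ] M n := hmart.condExp_ae_eq (Nat.le_succ n)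
    have h2 : μ[X|ℱ n] =ᵐ[μ] μ[M (n + 1)|ℱ n] - μ[M n|ℱ n] :=
      condExp_sub (hmart.integrable (n + 1)) (hmart.integrable n) (ℱ n)
    have h3 : μ[M n|ℱ n] = M n :=
      condExp_of_stronglyMeasurable (ℱ.le n) (hmart.stronglyAdapted n) (hmart.integrable n)
    rw [h3] at h2
    filter_upwards [h1, h2] with ω e1 e2
    simp only [Pi.sub_apply, Pi.zero_apply] at *
    rw [e2, e1]
    ring
  have hrhsint : Integrable (fun ω => 1 + s * X ω + c * X ω ^ 2) μ :=
    ((integrable_const 1).add (hXint.const_mul s)).add (hX2int.const_mul c)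
  have hmono : μ[fun ω => Real.exp (s * X ω)|ℱ n] ≤ᵐ[μ]
      μ[fun ω => 1 + s * X ω + c * X ω ^ 2|ℱ n] :=
    condExp_mono hexpint hrhsint (Filter.Eventually.of_forall hpt)
  have hsplit : μ[fun ω => 1 + s * X ω + c * X ω ^ 2|ℱ n] =ᵐ[μ]
      fun ω => 1 + s * (μ[X|ℱ n]) ω + c * (μ[fun ω' => X ω' ^ 2|ℱ n]) ω := by
    have e1 : (fun ω => 1 + s * X ω + c * X ω ^ 2)
        = ((fun _ : Ω => (1 : ℝ)) + s • X) + c • (fun ω => X ω ^ 2) := by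
      funext ω; simp [smul_eq_mul]
    rw [e1]
    have h1 := condExp_add (μ := μ) (m := ℱ n)
      ((integrable_const (1 : ℝ)).add (hXint.smul s)) ((hX2int).smul c)
    have h2 := condExp_add (μ := μ) (m := ℱ n)
      (integrable_const (1 : ℝ)) (hXint.smul s)
    have h3 := condExp_smul (μ := μ) (m := ℱ n) s X
    have h4 := condExp_smul (μ := μ) (m := ℱ n) c (fun ω => X ω ^ 2)
    have h5 : μ[fun _ : Ω => (1 : ℝ)|ℱ n] = fun _ => 1 := condExp_const (ℱ.le n) 1
    filter_upwards [h1, h2, h3, h4] with ω e1' e2' e3' e4'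
    simp only [Pi.add_apply, Pi.smul_apply, smul_eq_mul] at *
    rw [e1', e2', e3', e4', h5]
  filter_upwards [hmono, hsplit, hcondX, hvar] with ω e1 e2 e3 e4
  have : (μ[fun ω => Real.exp (s * X ω)|ℱ n]) ω ≤ 1 + c * σ2 := by
    rw [e2] at e1
    simp only [Pi.zero_apply] at e3
    have e4' : c * (μ[fun ω' => X ω' ^ 2|ℱ n]) ω ≤ c * σ2 :=
      mul_le_mul_of_nonneg_left e4 hcpos.le
    rw [e3] at e1
    simp only [mul_zero, add_zero] at e1
    linarith
  calc (μ[fun ω => Real.exp (s * X ω)|ℱ n]) ω ≤ 1 + c * σ2 := this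
    _ ≤ Real.exp (c * σ2) := by linarith [Real.add_one_le_exp (c * σ2)]

lemma telescope_abs_bound {Ω : Type*} (M : ℕ → Ω → ℝ) (k : ℕ) (m : ℝ) (hm : 0 < m)
    (hdiff : ∀ i, 1 ≤ i → i ≤ k → ∀ ω, |M i ω - M (i - 1) ω| ≤ m) :
    ∀ j, j ≤ k → ∀ ω, |M j ω - M 0 ω| ≤ j * m := by
  intro j
  induction j with
  | zero => intro _ ω; simp
  | succ j ih =>
    intro hj ω
    have h1 := hdiff (j + 1) (Nat.le_add_left 1 j) hj ω
    simp only [Nat.add_sub_cancel] at h1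
    have h2 := ih ((Nat.le_succ j).trans hj) ω
    have e : M (j + 1) ω - M 0 ω = (M (j + 1) ω - M j ω) + (M j ω - M 0 ω) := by ring
    rw [e]
    calc |(M (j + 1) ω - M j ω) + (M j ω - M 0 ω)|
        ≤ |M (j + 1) ω - M j ω| + |M j ω - M 0 ω| := abs_add_le _ _
      _ ≤ m + j * m := add_le_add h1 h2
      _ = (j + 1 : ℕ) * m := by push_cast; ring

lemma mgf_induction {Ω : Type*} [m0 : MeasurableSpace Ω] {μ : Measure Ω}
    [IsProbabilityMeasure μ] (ℱ : Filtration ℕ m0) (M : ℕ → Ω → ℝ) (k : ℕ)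
    (σ : ℕ → ℝ) (m s : ℝ) (hm : 0 < m) (hs : 0 < s) (hsm : s * m < 3)
    (hmart : Martingale M ℱ μ)
    (hvar : ∀ i, 1 ≤ i → i ≤ k →
      μ[fun ω => (M i ω - M (i - 1) ω) ^ 2|ℱ (i - 1)] ≤ᵐ[μ] fun _ => (σ i) ^ 2)
    (hdiff : ∀ i, 1 ≤ i → i ≤ k → ∀ ω, |M i ω - M (i - 1) ω| ≤ m) :
    ∀ n, n ≤ k → ∫ ω, Real.exp (s * (M n ω - M 0 ω)) ∂μ
      ≤ Real.exp (s ^ 2 / (2 * (1 - s * m / 3)) * ∑ i ∈ Finset.Icc 1 n, (σ i) ^ 2) := by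
  have htel := telescope_abs_bound M k m hm hdiff
  set c : ℝ := s ^ 2 / (2 * (1 - s * m / 3)) with hc
  intro n
  induction n with
  | zero =>
    intro _
    rw [show Finset.Icc 1 0 = (∅ : Finset ℕ) from Finset.Icc_eq_empty (by omega)]
    simp
  | succ n ih =>
    intro hn
    have hn' : n ≤ k := (Nat.le_succ n).trans hn
    have hd1 := hdiff (n + 1) (Nat.le_add_left 1 n) hn
    simp only [Nat.add_sub_cancel] at hd1
    have hv1 := hvar (n + 1) (Nat.le_add_left 1 n) hn
    simp only [Nat.add_sub_cancel] at hv1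
    have step := condexp_exp_step ℱ M hmart n ((σ (n + 1)) ^ 2) m s hm hs hsm hv1 hd1
    set f : Ω → ℝ := fun ω => Real.exp (s * (M n ω - M 0 ω)) with hf
    set g : Ω → ℝ := fun ω => Real.exp (s * (M (n + 1) ω - M n ω)) with hg
    have hfmeas : StronglyMeasurable[ℱ n] f := by
      apply Real.continuous_exp.comp_stronglyMeasurable
      exact ((hmart.stronglyAdapted n).sub
        ((hmart.stronglyAdapted 0).mono (ℱ.mono (Nat.zero_le n)))).const_mul s
    have hfb : ∀ ω, |f ω| ≤ Real.exp (s * (n * m)) := by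
      intro ω
      rw [abs_of_pos (Real.exp_pos _), Real.exp_le_exp]
      exact mul_le_mul_of_nonneg_left (abs_le.1 (htel n hn' ω)).2 hs.le
    have hf0 : ∀ ω, 0 ≤ f ω := fun ω => (Real.exp_pos _).le
    have hfint : Integrable f μ :=
      integrable_of_abs_bound (hfmeas.mono (ℱ.le n)).aestronglyMeasurable _ hfb
    have hgb : ∀ ω, |g ω| ≤ Real.exp (s * m) := by
      intro ω
      rw [abs_of_pos (Real.exp_pos _), Real.exp_le_exp]
      exact mul_le_mul_of_nonneg_left (abs_le.1 (hd1 ω)).2 hs.le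
    have hgmeas : StronglyMeasurable g := by
      apply Real.continuous_exp.comp_stronglyMeasurable
      exact (((hmart.stronglyMeasurable (n + 1)).mono (ℱ.le _)).sub
        ((hmart.stronglyMeasurable n).mono (ℱ.le _))).const_mul s
    have hgint : Integrable g μ :=
      integrable_of_abs_bound hgmeas.aestronglyMeasurable _ hgb
    have hfgint : Integrable (f * g) μ := by
      apply hgint.bdd_mul (c := Real.exp (s * (n * m)))
        (hfmeas.mono (ℱ.le n)).aestronglyMeasurable
      exact Filter.Eventually.of_forall fun ω => by
        rw [Real.norm_eq_abs]; exact hfb ω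
    have hkey : (fun ω => Real.exp (s * (M (n + 1) ω - M 0 ω))) = fun ω => f ω * g ω := by
      funext ω
      rw [hf, hg, ← Real.exp_add]
      ring_nf
    rw [hkey]
    have hpull : μ[f * g|ℱ n] =ᵐ[μ] f * μ[g|ℱ n] :=
      condExp_stronglyMeasurable_mul_of_bound (ℱ.le n) hfmeas hgint _
        (Filter.Eventually.of_forall fun ω => by rw [Real.norm_eq_abs]; exact hfb ω)
    have hint1 : Integrable (f * μ[g|ℱ n]) μ := by
      apply integrable_condExp.bdd_mul (c := Real.exp (s * (n * m)))
        (hfmeas.mono (ℱ.le n)).aestronglyMeasurable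
      exact Filter.Eventually.of_forall fun ω => by
        rw [Real.norm_eq_abs]; exact hfb ω
    calc ∫ ω, f ω * g ω ∂μ = ∫ ω, (μ[f * g|ℱ n]) ω ∂μ :=
          (integral_condExp (μ := μ) (f := f * g) (ℱ.le n)).symm
      _ = ∫ ω, f ω * (μ[g|ℱ n]) ω ∂μ := integral_congr_ae hpull
      _ ≤ ∫ ω, f ω * Real.exp (c * (σ (n + 1)) ^ 2) ∂μ := by
          apply integral_mono_ae hint1 (hfint.mul_const _)
          filter_upwards [step] with ω hω
          exact mul_le_mul_of_nonneg_left hω (hf0 ω)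
      _ = (∫ ω, f ω ∂μ) * Real.exp (c * (σ (n + 1)) ^ 2) := integral_mul_const _ _
      _ ≤ Real.exp (c * ∑ i ∈ Finset.Icc 1 n, (σ i) ^ 2)
            * Real.exp (c * (σ (n + 1)) ^ 2) :=
          mul_le_mul_of_nonneg_right (ih hn') (Real.exp_pos _).le
      _ = Real.exp (c * ∑ i ∈ Finset.Icc 1 (n + 1), (σ i) ^ 2) := by
          rw [← Real.exp_add, Finset.sum_Icc_succ_top (by omega : 1 ≤ n + 1)]
          congr 1
          ring


/-- Chung–Lu martingale concentration: if `M 0, …, M k` is a martingale with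
conditional variances `Var[M i | ℱ (i-1)] ≤ σ i ^ 2` and one-step differences
bounded by `m`, then `P[M k - M 0 ≥ λ] ≤ exp (-λ² / (2 (∑ σ i ² + m λ / 3)))`. -/
theorem martingale_chernoff
    {Ω : Type*} [m0 : MeasurableSpace Ω] {μ : Measure Ω} [IsProbabilityMeasure μ]
    (ℱ : Filtration ℕ m0) (M : ℕ → Ω → ℝ) (k : ℕ) (σ : ℕ → ℝ) (m : ℝ) (hm : 0 < m)
    (hmart : Martingale M ℱ μ)
    (hvar : ∀ i, 1 ≤ i → i ≤ k →
      μ[fun ω => (M i ω - M (i - 1) ω) ^ 2|ℱ (i - 1)] ≤ᵐ[μ] fun _ => (σ i) ^ 2)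
    (hdiff : ∀ i, 1 ≤ i → i ≤ k → ∀ ω, |M i ω - M (i - 1) ω| ≤ m)
    (lam : ℝ) (hlam : 0 < lam) :
    (μ {ω | M k ω - M 0 ω ≥ lam}).toReal ≤
      Real.exp (-(lam ^ 2) / (2 * (∑ i ∈ Finset.Icc 1 k, (σ i) ^ 2 + m * lam / 3))) := by
  set V : ℝ := ∑ i ∈ Finset.Icc 1 k, (σ i) ^ 2 with hV
  have hV0 : 0 ≤ V := Finset.sum_nonneg fun i _ => sq_nonneg _
  obtain ⟨s, hs, hsm, harith⟩ : ∃ s, 0 < s ∧ s * m < 3 ∧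
      s ^ 2 / (2 * (1 - s * m / 3)) * V - s * lam ≤ -(lam ^ 2) / (2 * (V + m * lam / 3)) := by
    rcases eq_or_lt_of_le hV0 with h0 | hpos
    · refine ⟨3 / (2 * m), by positivity, ?_, ?_⟩
      · rw [div_mul_eq_mul_div, div_lt_iff₀ (by positivity)]
        nlinarith
      · rw [← h0]
        have e1 : -(lam ^ 2) / (2 * ((0:ℝ) + m * lam / 3)) = -(3 * lam) / (2 * m) := by
          rw [div_eq_div_iff (by positivity) (by positivity)]
          ring
        rw [e1, mul_zero, zero_sub]
        apply le_of_eq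
        first
        | (field_simp; ring)
        | field_simp
    · have hD : 0 < V + m * lam / 3 := by positivity
      refine ⟨lam / (V + m * lam / 3), div_pos hlam hD, ?_, ?_⟩
      · rw [div_mul_eq_mul_div, div_lt_iff₀ hD]
        nlinarith
      · have h1 : 1 - (lam / (V + m * lam / 3)) * m / 3 = V / (V + m * lam / 3) := by
          field_simp
          ring
        rw [h1]
        apply le_of_eq
        field_simp [hpos.ne', hD.ne']
        ring
  have htel := telescope_abs_bound M k m hm hdiff
  have hint : Integrable (fun ω => Real.exp (s * (M k ω - M 0 ω))) μ := by
    apply integrable_of_abs_bound ?_ (Real.exp (s * (k * m)))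
    · intro ω
      rw [abs_of_pos (Real.exp_pos _), Real.exp_le_exp]
      exact mul_le_mul_of_nonneg_left (abs_le.1 (htel k le_rfl ω)).2 hs.le
    · exact (Real.continuous_exp.comp_stronglyMeasurable
        ((((hmart.stronglyMeasurable k).mono (ℱ.le _)).sub
          ((hmart.stronglyMeasurable 0).mono (ℱ.le _))).const_mul s)).aestronglyMeasurable
  have hmgf := mgf_induction ℱ M k σ m s hm hs hsm hmart hvar hdiff k le_rfl
  have hchern := measure_ge_le_exp_mul_mgf (X := fun ω => M k ω - M 0 ω) (μ := μ)
    lam hs.le hint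
  calc (μ {ω | M k ω - M 0 ω ≥ lam}).toReal
      ≤ Real.exp (-s * lam) * mgf (fun ω => M k ω - M 0 ω) μ s := hchern
    _ ≤ Real.exp (-s * lam) * Real.exp (s ^ 2 / (2 * (1 - s * m / 3)) * V) := by
        apply mul_le_mul_of_nonneg_left _ (Real.exp_pos _).le
        exact hmgf
    _ = Real.exp (s ^ 2 / (2 * (1 - s * m / 3)) * V - s * lam) := by
        rw [← Real.exp_add]; congr 1; ring
    _ ≤ Real.exp (-(lam ^ 2) / (2 * (V + m * lam / 3))) := Real.exp_le_exp.2 harith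
end

section
/- Let r ≥ 2, p = p(n) with np → ∞ and p = o(n^{-1/r}), t_0 = (r!/(np^r))^{1/(r-1)}, t_1 = ((r-1)!/(np^r))^{1/(r-1)}, π̂(t) = P[Bin(t,p) ≥ r], and a_c = -min_{t ≤ t_0} (nπ̂(t) - t)/(1 - π̂(t)). Then a_c ≥ (t_1 - nπ̂(t_1))/(1 - π̂(t_1)) = (1+o(1))(1 - 1/r) t_1, and in particular a_c = Ω(t_0). -/
open Filter Real Asymptotics Finset

/-- `P[Bin(t,p) ≥ r]` for a binomial with `t` trials and success probability `p`. -/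
def binomTail (p : ℝ) (t r : ℕ) : ℝ :=
  ∑ j ∈ Finset.Icc r t, (t.choose j : ℝ) * p ^ j * (1 - p) ^ (t - j)

lemma binomTail_nonneg {q : ℝ} (hq0 : 0 ≤ q) (hq1 : q ≤ 1) (m r : ℕ) :
    0 ≤ binomTail q m r := by
  refine Finset.sum_nonneg fun j hj => ?_
  have : (0:ℝ) ≤ 1 - q := by linarith
  positivity

lemma binomTail_le {q : ℝ} (hq0 : 0 ≤ q) (hq1 : q ≤ 1) (m r : ℕ) :
    binomTail q m r ≤ (m.choose r : ℝ) * q ^ r := by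
  rcases le_or_gt r m with hrm | hrm
  · have h1q : (0:ℝ) ≤ 1 - q := by linarith
    have step1 : binomTail q m r ≤
        ∑ j ∈ Finset.Icc r m, ((m.choose r : ℝ) * ((m - r).choose (j - r) : ℝ))
          * q ^ j * (1 - q) ^ (m - j) := by
      refine Finset.sum_le_sum fun j hj => ?_
      simp only [Finset.mem_Icc] at hj
      have key : (m.choose j : ℝ) ≤ (m.choose r : ℝ) * ((m - r).choose (j - r) : ℝ) := by
        have h := Nat.choose_mul (n := m) hj.1
        have hpos : 1 ≤ j.choose r := Nat.choose_pos hj.1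
        have : m.choose j ≤ m.choose r * (m - r).choose (j - r) := by
          calc m.choose j ≤ m.choose j * j.choose r := Nat.le_mul_of_pos_right _ hpos
          _ = m.choose r * (m - r).choose (j - r) := h
        exact_mod_cast this
      have : (0:ℝ) ≤ q ^ j * (1 - q) ^ (m - j) := by positivity
      nlinarith [mul_le_mul_of_nonneg_right key this]
    refine step1.trans (le_of_eq ?_)
    have reindex : ∑ j ∈ Finset.Icc r m, ((m.choose r : ℝ) * ((m - r).choose (j - r) : ℝ))
          * q ^ j * (1 - q) ^ (m - j)
        = (m.choose r : ℝ) * q ^ r *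
          ∑ k ∈ Finset.range (m - r + 1), ((m - r).choose k : ℝ) * q ^ k * (1 - q) ^ (m - r - k) := by
      rw [Finset.mul_sum]
      refine Finset.sum_nbij' (fun j => j - r) (fun k => k + r) ?_ ?_ ?_ ?_ ?_
      · intro j hj; simp only [Finset.mem_Icc] at hj
        simp only [Finset.mem_range]; omega
      · intro k hk; simp only [Finset.mem_range] at hk
        simp only [Finset.mem_Icc]; omega
      · intro j hj; simp only [Finset.mem_Icc] at hj; show j - r + r = j; omega
      · intro k hk; simp only [Finset.mem_range] at hk; show k + r - r = k; omega
      · intro j hj; simp only [Finset.mem_Icc] at hj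
        obtain ⟨k, rfl⟩ : ∃ k, j = r + k := ⟨j - r, by omega⟩
        have e1 : r + k - r = k := by omega
        have e2 : m - (r + k) = m - r - k := by omega
        simp only [e1, e2, pow_add]
        ring
    rw [reindex]
    have binom : ∑ k ∈ Finset.range (m - r + 1), ((m - r).choose k : ℝ) * q ^ k * (1 - q) ^ (m - r - k) = 1 := by
      have h := add_pow q (1 - q) (m - r)
      simp only [add_sub_cancel, one_pow] at h
      calc (∑ k ∈ Finset.range (m - r + 1), ((m - r).choose k : ℝ) * q ^ k * (1 - q) ^ (m - r - k))
          = ∑ k ∈ Finset.range (m - r + 1), q ^ k * (1 - q) ^ (m - r - k) * ((m - r).choose k) :=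
            Finset.sum_congr rfl fun k _ => by ring
        _ = 1 := h.symm
    rw [binom, mul_one]
  · unfold binomTail
    rw [Finset.Icc_eq_empty (by omega), Finset.sum_empty]
    positivity

lemma le_binomTail {q : ℝ} (hq0 : 0 ≤ q) (hq1 : q ≤ 1) {m r : ℕ} (hrm : r ≤ m) :
    (m.choose r : ℝ) * q ^ r * (1 - q) ^ (m - r) ≤ binomTail q m r := by
  have h1q : (0:ℝ) ≤ 1 - q := by linarith
  refine Finset.single_le_sum (f := fun j => (m.choose j : ℝ) * q ^ j * (1 - q) ^ (m - j))
    (fun j _ => by positivity) ?_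
  simp [hrm]
/-- With `a_c = -min_{t ≤ t₀} (nπ̂(t) - t)/(1 - π̂(t))` and `t₁ = ((r-1)!/(npʳ))^(1/(r-1))`,
one has `a_c ≥ (t₁ - nπ̂(t₁))/(1 - π̂(t₁)) = (1+o(1))(1 - 1/r) t₁`, and `a_c = Ω(t₀)`. -/
theorem ac_lower (r : ℕ) (hr : 2 ≤ r) (p : ℕ → ℝ) (hp : ∀ n, p n ∈ Set.Ioo (0 : ℝ) 1)
    (hnp : Tendsto (fun n : ℕ => n * p n) atTop atTop)
    (hnpr : Tendsto (fun n : ℕ => n * p n ^ r) atTop (nhds 0))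
    (t0 t1 ac : ℕ → ℝ)
    (ht0 : ∀ n, t0 n = ((r.factorial : ℝ) / (n * p n ^ r)) ^ ((1 : ℝ) / (r - 1)))
    (ht1 : ∀ n, t1 n = (((r - 1).factorial : ℝ) / (n * p n ^ r)) ^ ((1 : ℝ) / (r - 1)))
    (hac : ∀ n, ac n = -((Finset.range (⌊t0 n⌋₊ + 1)).inf' Finset.nonempty_range_add_one
      (fun t => (n * binomTail (p n) t r - t) / (1 - binomTail (p n) t r)))) :
    (∀ᶠ n in atTop, ac n ≥
      ((⌊t1 n⌋₊ : ℝ) - n * binomTail (p n) ⌊t1 n⌋₊ r) / (1 - binomTail (p n) ⌊t1 n⌋₊ r)) ∧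
    Tendsto (fun n : ℕ =>
        (((⌊t1 n⌋₊ : ℝ) - n * binomTail (p n) ⌊t1 n⌋₊ r) / (1 - binomTail (p n) ⌊t1 n⌋₊ r)) /
          ((1 - 1 / r) * t1 n))
      atTop (nhds 1) ∧
    ∃ c : ℝ, 0 < c ∧ ∀ᶠ n in atTop, ac n ≥ c * t0 n := by
  have hrR : (1:ℝ) < (r:ℝ) := by exact_mod_cast Nat.lt_of_lt_of_le one_lt_two hr
  have hrpos : (0:ℝ) < r := by linarith
  have he_pos : (0:ℝ) < (1:ℝ) / ((r:ℝ) - 1) := by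
    apply div_pos one_pos; linarith
  set e : ℝ := (1:ℝ) / ((r:ℝ) - 1) with he_def
  have hq0 : ∀ n, 0 < p n := fun n => (hp n).1
  have hq1 : ∀ n, p n < 1 := fun n => (hp n).2
  set B : ℕ → ℝ := fun n => binomTail (p n) ⌊t1 n⌋₊ r with hB_def
  have hB0' : ∀ n, 0 ≤ B n := fun n => binomTail_nonneg (hq0 n).le (hq1 n).le _ _
  have hcast : (((r-1:ℕ)):ℝ) = (r:ℝ) - 1 := by
    have h1 : 1 ≤ r := by omega
    push_cast [h1]
    ring
  have hfacR : (r.factorial : ℝ) = r * ((r-1).factorial : ℝ) := by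
    have h1 : r - 1 + 1 = r := by omega
    conv_lhs => rw [← h1]
    rw [Nat.factorial_succ]
    push_cast
    rw [hcast]
    ring
  -- t1 ≤ t0 pointwise
  have ht1t0 : ∀ n, t1 n ≤ t0 n := by
    intro n
    rw [ht1 n, ht0 n]
    apply Real.rpow_le_rpow
    · have := hq0 n
      positivity
    · rw [div_eq_mul_inv, div_eq_mul_inv]
      apply mul_le_mul_of_nonneg_right
      · exact_mod_cast Nat.factorial_le (Nat.sub_le r 1)
      · have := hq0 n; positivity
    · positivity
  -- part 1 (holds for all n)
  have part1 : ∀ n, ac n ≥ ((⌊t1 n⌋₊ : ℝ) - n * B n) / (1 - B n) := by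
    intro n
    have hmem : ⌊t1 n⌋₊ ∈ Finset.range (⌊t0 n⌋₊ + 1) :=
      Finset.mem_range.2 (Nat.lt_succ_of_le (Nat.floor_le_floor (ht1t0 n)))
    have hle := Finset.inf'_le (s := Finset.range (⌊t0 n⌋₊ + 1))
      (fun t => ((n:ℝ) * binomTail (p n) t r - t) / (1 - binomTail (p n) t r)) hmem
    have h2 := neg_le_neg hle
    rw [← hac n] at h2
    calc ((⌊t1 n⌋₊ : ℝ) - n * B n) / (1 - B n)
        = -(((n:ℝ) * B n - ⌊t1 n⌋₊) / (1 - B n)) := by rw [← neg_div, neg_sub]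
      _ ≤ ac n := h2
  have hx_pos : ∀ᶠ n : ℕ in atTop, (0:ℝ) < n * p n ^ r := by
    filter_upwards [eventually_ge_atTop 1] with n hn
    have h1 : (0:ℝ) < n := by exact_mod_cast hn
    have := hq0 n; positivity
  have hXtop : Tendsto (fun n : ℕ => ((r-1).factorial : ℝ) / (n * p n ^ r)) atTop atTop := by
    have h1 : Tendsto (fun n : ℕ => n * p n ^ r) atTop (nhdsWithin 0 (Set.Ioi 0)) :=
      tendsto_nhdsWithin_iff.2 ⟨hnpr, hx_pos⟩
    have h2 : Tendsto (fun n : ℕ => (n * p n ^ r)⁻¹) atTop atTop := h1.inv_tendsto_nhdsGT_zero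
    have h3 : (0:ℝ) < ((r-1).factorial : ℝ) := by positivity
    simpa [div_eq_mul_inv] using h2.const_mul_atTop h3
  have ht1top : Tendsto t1 atTop atTop := by
    have h1 := (tendsto_rpow_atTop he_pos).comp hXtop
    refine Tendsto.congr (fun n => ?_) h1
    rw [ht1 n]; rfl
  have ht1nonneg : ∀ n, 0 ≤ t1 n := fun n => by
    rw [ht1 n]
    exact Real.rpow_nonneg (div_nonneg (by positivity)
      (mul_nonneg (Nat.cast_nonneg n) (pow_nonneg (hq0 n).le r))) _
  have hm_div : Tendsto (fun n => (⌊t1 n⌋₊ : ℝ) / t1 n) atTop (nhds 1) :=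
    tendsto_nat_floor_div_atTop.comp ht1top
  -- t1 * p → 0
  have ht1q_eq : ∀ᶠ n : ℕ in atTop, t1 n * p n =
      (((r-1).factorial : ℝ) / (n * p n)) ^ e := by
    filter_upwards [eventually_ge_atTop 1] with n hn
    have hn0 : (0:ℝ) < n := by exact_mod_cast hn
    have hq := hq0 n
    have hX0 : (0:ℝ) ≤ ((r-1).factorial : ℝ) / (n * p n ^ r) := by positivity
    have hre1 : ((r:ℝ) - 1) * e = 1 := by
      have hrne : (r:ℝ) - 1 ≠ 0 := by linarith
      rw [he_def]; field_simp
    have hqpe : p n = (p n ^ ((r:ℝ) - 1)) ^ e := by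
      rw [← Real.rpow_mul hq.le, hre1, Real.rpow_one]
    have hbase : (((r-1).factorial : ℝ) / (n * p n ^ r)) * p n ^ ((r:ℝ)-1)
        = ((r-1).factorial : ℝ) / (n * p n) := by
      rw [← hcast, Real.rpow_natCast]
      have hpr : p n ^ r = p n ^ (r-1) * p n := by
        rw [← pow_succ]; congr 1; omega
      rw [hpr, div_mul_eq_mul_div]
      rw [show (n:ℝ) * (p n ^ (r-1) * p n) = ((n:ℝ) * p n) * p n ^ (r-1) by ring]
      exact mul_div_mul_right _ _ (pow_ne_zero _ hq.ne')
    calc t1 n * p n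
        = (((r-1).factorial : ℝ) / (n * p n ^ r)) ^ e * (p n ^ ((r:ℝ)-1)) ^ e := by
          rw [ht1 n, ← hqpe]
      _ = ((((r-1).factorial : ℝ) / (n * p n ^ r)) * p n ^ ((r:ℝ)-1)) ^ e :=
          (Real.mul_rpow hX0 (Real.rpow_nonneg hq.le _)).symm
      _ = (((r-1).factorial : ℝ) / (n * p n)) ^ e := by rw [hbase]
  have ht1q : Tendsto (fun n => t1 n * p n) atTop (nhds 0) := by
    have hg : Tendsto (fun n : ℕ => ((r-1).factorial : ℝ) / (n * p n)) atTop (nhds 0) :=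
      tendsto_const_nhds.div_atTop hnp
    have hc : ContinuousAt (fun y : ℝ => y ^ e) 0 :=
      Real.continuousAt_rpow_const 0 e (Or.inr he_pos.le)
    have h2 := hc.tendsto.comp hg
    rw [Real.zero_rpow he_pos.ne'] at h2
    exact h2.congr' (by filter_upwards [ht1q_eq] with n h using h.symm)
  -- n * q^r * t1^(r-1) = (r-1)!  (for n ≥ 1)
  have hXval : ∀ᶠ n : ℕ in atTop,
      (n:ℝ) * p n ^ r * t1 n ^ (r - 1 : ℕ) = ((r-1).factorial : ℝ) := by
    filter_upwards [hx_pos] with n hx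
    have hX0 : (0:ℝ) ≤ ((r-1).factorial : ℝ) / (n * p n ^ r) := by positivity
    have her1 : e * ((r:ℝ) - 1) = 1 := by
      have hrne : (r:ℝ) - 1 ≠ 0 := by linarith
      rw [he_def]; field_simp
    have ht1pow : t1 n ^ (r - 1 : ℕ) = ((r-1).factorial : ℝ) / (n * p n ^ r) := by
      rw [ht1 n, ← Real.rpow_natCast (_ ^ e) (r-1), hcast, ← Real.rpow_mul hX0, her1,
        Real.rpow_one]
    rw [ht1pow, mul_div_cancel₀ _ hx.ne']
  -- U → 1/r
  set U : ℕ → ℝ := fun n => (n:ℝ) * ((⌊t1 n⌋₊).choose r : ℝ) * p n ^ r / t1 n with hU_def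
  have hprod : Tendsto (fun n => ∏ i ∈ Finset.range r, (((⌊t1 n⌋₊:ℝ) - i) / t1 n))
      atTop (nhds 1) := by
    have h1 : ∀ i ∈ Finset.range r,
        Tendsto (fun n => ((⌊t1 n⌋₊:ℝ) - i) / t1 n) atTop (nhds 1) := by
      intro i _
      have h2 : Tendsto (fun n => (⌊t1 n⌋₊:ℝ)/t1 n - (i:ℝ)/t1 n) atTop (nhds (1 - 0)) :=
        hm_div.sub (tendsto_const_nhds.div_atTop ht1top)
      rw [sub_zero] at h2
      refine h2.congr fun n => ?_
      rw [← sub_div]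
    have h3 := tendsto_finset_prod (Finset.range r) h1
    simpa using h3
  have hUeq : ∀ᶠ n : ℕ in atTop, U n = (1/(r:ℝ)) *
      ∏ i ∈ Finset.range r, (((⌊t1 n⌋₊:ℝ) - i) / t1 n) := by
    filter_upwards [hXval, ht1top.eventually_ge_atTop (r:ℝ),
      ht1top.eventually_gt_atTop 0] with n hXv hrn ht1p
    have hrm : r ≤ ⌊t1 n⌋₊ := Nat.le_floor hrn
    set m := ⌊t1 n⌋₊ with hm_def
    have hchoose : (m.choose r : ℝ) * (r.factorial : ℝ) = ∏ i ∈ Finset.range r, ((m:ℝ) - i) := by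
      have h1 : r.factorial * m.choose r = m.descFactorial r :=
        (Nat.descFactorial_eq_factorial_mul_choose m r).symm
      have h2 : m.descFactorial r = ∏ i ∈ Finset.range r, (m - i) :=
        Nat.descFactorial_eq_prod_range m r
      have h3 : ((∏ i ∈ Finset.range r, (m - i) : ℕ) : ℝ) = ∏ i ∈ Finset.range r, ((m:ℝ) - i) := by
        rw [Nat.cast_prod]
        refine Finset.prod_congr rfl fun i hi => ?_
        have : i ≤ m := le_trans (Finset.mem_range.1 hi).le hrm
        exact Nat.cast_sub this
      rw [← h3, ← h2, ← h1]
      push_cast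
      ring
    have hprodd : ∏ i ∈ Finset.range r, (((m:ℝ) - i) / t1 n)
        = (∏ i ∈ Finset.range r, ((m:ℝ) - i)) / t1 n ^ r := by
      rw [Finset.prod_div_distrib, Finset.prod_const, Finset.card_range]
    rw [hU_def]
    simp only
    rw [hprodd, ← hchoose]
    have ht1pow : t1 n ^ r = t1 n ^ (r-1:ℕ) * t1 n := by
      rw [← pow_succ]; congr 1; omega
    rw [ht1pow, hfacR]
    field_simp
    ring_nf
    linear_combination ((⌊t1 n⌋₊).choose r : ℝ) * hXv
  have hU : Tendsto U atTop (nhds (1/(r:ℝ))) := by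
    have h1 : Tendsto (fun n => (1/(r:ℝ)) *
        ∏ i ∈ Finset.range r, (((⌊t1 n⌋₊:ℝ) - i) / t1 n)) atTop (nhds ((1/(r:ℝ)) * 1)) :=
      tendsto_const_nhds.mul hprod
    rw [mul_one] at h1
    exact h1.congr' (by filter_upwards [hUeq] with n h using h.symm)
  -- D → 1/r
  set D : ℕ → ℝ := fun n => (n:ℝ) * B n / t1 n with hD_def
  have hDupper : ∀ᶠ n : ℕ in atTop, D n ≤ U n := by
    filter_upwards [ht1top.eventually_gt_atTop 0] with n ht1p
    have h1 : (n:ℝ) * B n ≤ (n:ℝ) * (((⌊t1 n⌋₊).choose r : ℝ) * p n ^ r) :=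
      mul_le_mul_of_nonneg_left (binomTail_le (hq0 n).le (hq1 n).le _ _) (Nat.cast_nonneg n)
    calc D n ≤ (n:ℝ) * (((⌊t1 n⌋₊).choose r : ℝ) * p n ^ r) / t1 n :=
          (div_le_div_iff_of_pos_right ht1p).2 h1
      _ = U n := by rw [hU_def]; ring
  have hDlower : ∀ᶠ n : ℕ in atTop, U n * (1 - t1 n * p n) ≤ D n := by
    filter_upwards [ht1top.eventually_ge_atTop (r:ℝ), ht1top.eventually_gt_atTop 0]
      with n hrn ht1p
    have hq := hq0 n
    have hrm : r ≤ ⌊t1 n⌋₊ := Nat.le_floor hrn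
    set m := ⌊t1 n⌋₊ with hm_def
    have hmle : (m:ℝ) ≤ t1 n := Nat.floor_le (ht1nonneg n)
    have hC0 : (0:ℝ) ≤ (m.choose r : ℝ) * p n ^ r := by positivity
    have hber : 1 - ((m - r : ℕ):ℝ) * p n ≤ (1 - p n) ^ (m - r) := by
      have h2 := one_add_mul_le_pow (a := -p n) (by linarith [hq, hq1 n] : (-2:ℝ) ≤ -p n) (m - r)
      calc 1 - ((m - r : ℕ):ℝ) * p n = 1 + ((m-r:ℕ):ℝ) * (-p n) := by ring
        _ ≤ (1 + -p n) ^ (m - r) := h2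
        _ = (1 - p n) ^ (m - r) := by ring_nf
    have hstep : 1 - t1 n * p n ≤ (1 - p n) ^ (m - r) := by
      have h3 : ((m - r : ℕ):ℝ) ≤ t1 n := by
        calc ((m - r : ℕ):ℝ) ≤ (m:ℝ) := by exact_mod_cast Nat.sub_le m r
          _ ≤ t1 n := hmle
      have h4 : ((m - r:ℕ):ℝ) * p n ≤ t1 n * p n :=
        mul_le_mul_of_nonneg_right h3 hq.le
      linarith
    have hb : (m.choose r : ℝ) * p n ^ r * (1 - t1 n * p n) ≤ B n := by
      calc (m.choose r : ℝ) * p n ^ r * (1 - t1 n * p n)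
          ≤ (m.choose r : ℝ) * p n ^ r * ((1 - p n) ^ (m - r)) :=
            mul_le_mul_of_nonneg_left hstep hC0
        _ ≤ B n := le_binomTail hq.le (hq1 n).le hrm
    have h5 : (n:ℝ) * ((m.choose r : ℝ) * p n ^ r * (1 - t1 n * p n)) ≤ (n:ℝ) * B n :=
      mul_le_mul_of_nonneg_left hb (Nat.cast_nonneg n)
    calc U n * (1 - t1 n * p n)
        = (n:ℝ) * ((m.choose r : ℝ) * p n ^ r * (1 - t1 n * p n)) / t1 n := by
          rw [hU_def]; ring
      _ ≤ (n:ℝ) * B n / t1 n := (div_le_div_iff_of_pos_right ht1p).2 h5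
      _ = D n := rfl
  have hL : Tendsto (fun n => U n * (1 - t1 n * p n)) atTop (nhds (1/(r:ℝ))) := by
    have h1 : Tendsto (fun n => U n * (1 - t1 n * p n)) atTop (nhds ((1/(r:ℝ)) * (1 - 0))) :=
      hU.mul (tendsto_const_nhds.sub ht1q)
    simpa using h1
  have hD : Tendsto D atTop (nhds (1/(r:ℝ))) :=
    tendsto_of_tendsto_of_tendsto_of_le_of_le' hL hU hDlower hDupper
  -- B → 0
  have hBto0 : Tendsto B atTop (nhds 0) := by
    have hub : ∀ᶠ n : ℕ in atTop, B n ≤ (t1 n * p n) ^ r / (r.factorial : ℝ) := by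
      filter_upwards [] with n
      have hq := hq0 n
      have h1 : B n ≤ ((⌊t1 n⌋₊).choose r : ℝ) * p n ^ r :=
        binomTail_le hq.le (hq1 n).le _ _
      have h2 : ((⌊t1 n⌋₊).choose r : ℝ) ≤ ((⌊t1 n⌋₊:ℝ) ^ r) / (r.factorial : ℝ) :=
        Nat.choose_le_pow_div r _
      have h3 : ((⌊t1 n⌋₊:ℝ) * p n) ^ r ≤ (t1 n * p n) ^ r := by
        apply pow_le_pow_left₀ (by positivity)
        exact mul_le_mul_of_nonneg_right (Nat.floor_le (ht1nonneg n)) hq.le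
      calc B n ≤ ((⌊t1 n⌋₊).choose r : ℝ) * p n ^ r := h1
        _ ≤ ((⌊t1 n⌋₊:ℝ) ^ r / (r.factorial : ℝ)) * p n ^ r :=
            mul_le_mul_of_nonneg_right h2 (by positivity)
        _ = ((⌊t1 n⌋₊:ℝ) * p n) ^ r / (r.factorial : ℝ) := by rw [mul_pow]; ring
        _ ≤ (t1 n * p n) ^ r / (r.factorial : ℝ) := by
            apply div_le_div_of_nonneg_right h3 (by positivity)
    have hlim : Tendsto (fun n => (t1 n * p n) ^ r / (r.factorial : ℝ)) atTop (nhds 0) := by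
      have h1 : Tendsto (fun n => (t1 n * p n) ^ r) atTop (nhds (0 ^ r)) := ht1q.pow r
      rw [zero_pow (by omega : r ≠ 0)] at h1
      simpa using h1.div_const (r.factorial : ℝ)
    exact tendsto_of_tendsto_of_tendsto_of_le_of_le' tendsto_const_nhds hlim
      (Eventually.of_forall hB0') hub
  -- part 2
  have hrlt1 : 1/(r:ℝ) < 1 := by
    rw [div_lt_one hrpos]; exact hrR
  have hden_ne : (1:ℝ) - 1/(r:ℝ) ≠ 0 := by linarith
  have part2 : Tendsto (fun n : ℕ =>
      (((⌊t1 n⌋₊ : ℝ) - n * binomTail (p n) ⌊t1 n⌋₊ r) / (1 - binomTail (p n) ⌊t1 n⌋₊ r)) /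
        ((1 - 1 / r) * t1 n)) atTop (nhds 1) := by
    have heq : ∀ n : ℕ,
        (((⌊t1 n⌋₊ : ℝ) - n * binomTail (p n) ⌊t1 n⌋₊ r) / (1 - binomTail (p n) ⌊t1 n⌋₊ r)) /
          ((1 - 1 / r) * t1 n)
        = ((⌊t1 n⌋₊:ℝ)/t1 n - D n) / ((1 - B n) * (1 - 1/(r:ℝ))) := by
      intro n
      rw [hD_def]
      simp only
      rw [← sub_div, div_div, div_div,
        show (1 - B n) * ((1 - 1/(r:ℝ)) * t1 n) = t1 n * ((1 - B n) * (1 - 1/(r:ℝ))) from by ring]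
    have hnum : Tendsto (fun n => (⌊t1 n⌋₊:ℝ)/t1 n - D n) atTop (nhds (1 - 1/(r:ℝ))) :=
      hm_div.sub hD
    have hden : Tendsto (fun n => (1 - B n) * (1 - 1/(r:ℝ))) atTop
        (nhds ((1 - 0) * (1 - 1/(r:ℝ)))) :=
      (tendsto_const_nhds.sub hBto0).mul tendsto_const_nhds
    have hden' : ((1:ℝ) - 0) * (1 - 1/(r:ℝ)) ≠ 0 := by
      rw [sub_zero, one_mul]; exact hden_ne
    have h1 := hnum.div hden hden'
    have h2 : (1 - 1/(r:ℝ)) / (((1:ℝ) - 0) * (1 - 1/(r:ℝ))) = 1 := by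
      rw [sub_zero, one_mul, div_self hden_ne]
    rw [h2] at h1
    exact h1.congr fun n => (heq n).symm
  refine ⟨Eventually.of_forall part1, part2, ?_⟩
  -- part 3
  refine ⟨(1/(r:ℝ)) ^ e * ((1 - 1/(r:ℝ)) / 2),
    mul_pos (Real.rpow_pos_of_pos (by positivity) _) (by linarith [hrlt1]), ?_⟩
  have ht1t0' : ∀ n, t1 n = (1/(r:ℝ)) ^ e * t0 n := by
    intro n
    have hy0 : (0:ℝ) ≤ (n:ℝ) * p n ^ r := by
      have := hq0 n; positivity
    rw [ht1 n, ht0 n, ← Real.mul_rpow (by positivity) (div_nonneg (by positivity) hy0)]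
    congr 1
    rw [div_mul_div_comm, one_mul, hfacR]
    exact (mul_div_mul_left _ _ (ne_of_gt hrpos)).symm
  have hEhalf : ∀ᶠ n : ℕ in atTop,
      (((⌊t1 n⌋₊ : ℝ) - n * binomTail (p n) ⌊t1 n⌋₊ r) / (1 - binomTail (p n) ⌊t1 n⌋₊ r)) /
        ((1 - 1 / r) * t1 n) ≥ 1/2 :=
    part2.eventually (eventually_ge_nhds (by norm_num : (1:ℝ)/2 < 1))
  filter_upwards [hEhalf, ht1top.eventually_gt_atTop 0] with n hE2 ht1p
  have hdenpos : (0:ℝ) < (1 - 1/(r:ℝ)) * t1 n := by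
    apply mul_pos (by linarith) ht1p
  have hval : ((⌊t1 n⌋₊ : ℝ) - n * B n) / (1 - B n)
      = ((((⌊t1 n⌋₊ : ℝ) - n * B n) / (1 - B n)) / ((1 - 1/(r:ℝ)) * t1 n))
        * ((1 - 1/(r:ℝ)) * t1 n) :=
    (div_mul_cancel₀ _ hdenpos.ne').symm
  calc ac n ≥ ((⌊t1 n⌋₊ : ℝ) - n * B n) / (1 - B n) := part1 n
    _ = ((((⌊t1 n⌋₊ : ℝ) - n * B n) / (1 - B n)) / ((1 - 1/(r:ℝ)) * t1 n))
        * ((1 - 1/(r:ℝ)) * t1 n) := hval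
    _ ≥ (1/2) * ((1 - 1/(r:ℝ)) * t1 n) := mul_le_mul_of_nonneg_right hE2 hdenpos.le
    _ = (1/(r:ℝ)) ^ e * ((1 - 1/(r:ℝ)) / 2) * t0 n := by rw [ht1t0' n]; ring
end

section
/- In G(n,p) with np → ∞, let r ≥ 2 be fixed and let U, W ⊂ [n] with |U| = ⌊n/(2^r r! √e)⌋. Then with probability at least 1 - exp(-Ω(p^{-1})), the number of vertices in [n] \ (U ∪ W) having fewer than r neighbours in U is at most p^{-1}. -/
set_option maxHeartbeats 1000000

open Filter Real Asymptotics Finset MeasureTheory ProbabilityTheory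
open scoped ENNReal

lemma ber_true {P : NNReal} (hP : P ≤ 1) : (PMF.bernoulli P hP).toMeasure {true} = P := by
  rw [PMF.toMeasure_apply_singleton _ _ (measurableSet_singleton _)]
  rfl

lemma ber_false {P : NNReal} (hP : P ≤ 1) : (PMF.bernoulli P hP).toMeasure {false} = 1 - P := by
  rw [PMF.toMeasure_apply_singleton _ _ (measurableSet_singleton _)]
  rfl

lemma cyl_measure {n : ℕ} {P : NNReal} (hP : P ≤ 1) (S Uu : Finset (Fin n))
    (hdisj : ∀ v ∈ S, v ∉ Uu) (F : Fin n → Finset (Fin n)) (hF : ∀ v, F v ⊆ Uu) :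
    (Measure.pi fun _ : Sym2 (Fin n) => (PMF.bernoulli P hP).toMeasure)
      {ω | ∀ v ∈ S, ∀ u ∈ Uu, (ω s(u, v) = true ↔ u ∈ F v)} =
    (∏ v ∈ S, P ^ (F v).card * (1 - P) ^ (Uu.card - (F v).card) : ℝ≥0∞) := by
  classical
  set ν := (PMF.bernoulli P hP).toMeasure with hν
  set t : Sym2 (Fin n) → Set Bool :=
    fun e => {b | ∀ v ∈ S, ∀ u ∈ Uu, e = s(u, v) → (b = true ↔ u ∈ F v)} with ht
  have hset : {ω : Sym2 (Fin n) → Bool | ∀ v ∈ S, ∀ u ∈ Uu, (ω s(u, v) = true ↔ u ∈ F v)}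
      = Set.pi Set.univ t := by
    ext ω
    simp only [Set.mem_setOf_eq, Set.mem_pi, Set.mem_univ, forall_true_left, ht]
    constructor
    · intro h e v hv u hu he
      subst he; exact h v hv u hu
    · intro h v hv u hu
      exact h s(u, v) v hv u hu rfl
  rw [hset, Measure.pi_pi]
  set D : Finset (Sym2 (Fin n)) := (S ×ˢ Uu).image fun x => s(x.2, x.1) with hD
  have hprod1 : ∏ e ∈ D, ν (t e) = ∏ e : Sym2 (Fin n), ν (t e) := by
    refine Finset.prod_subset (Finset.subset_univ _) ?_
    intro e _ he
    have : t e = Set.univ := by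
      ext b
      simp only [ht, Set.mem_setOf_eq, Set.mem_univ, iff_true]
      intro v hv u hu hee
      exact absurd (Finset.mem_image.mpr ⟨(v, u), Finset.mem_product.mpr ⟨hv, hu⟩, hee.symm⟩) he
    rw [this]
    exact measure_univ
  rw [← hprod1, hD, Finset.prod_image ?hinj]
  case hinj =>
    rintro ⟨v, u⟩ hx ⟨v', u'⟩ hy hxy
    simp only [Finset.mem_coe, Finset.mem_product] at hx hy
    rcases Sym2.eq_iff.mp hxy with ⟨h1, h2⟩ | ⟨h1, h2⟩
    · exact Prod.ext h2 h1
    · simp only at h1 h2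
      exact absurd (h1 ▸ hx.2) (hdisj v' hy.1)
  rw [Finset.prod_product]
  refine Finset.prod_congr rfl fun v hv => ?_
  have hinner : ∀ u ∈ Uu, ν (t s(u, v)) = if u ∈ F v then (P : ℝ≥0∞) else 1 - (P : ℝ≥0∞) := by
    intro u hu
    have htv : t s(u, v) = (if u ∈ F v then ({true} : Set Bool) else {false}) := by
      ext b
      simp only [ht, Set.mem_setOf_eq]
      constructor
      · intro h
        have := h v hv u hu rfl
        by_cases hm : u ∈ F v <;> simp [hm] at this ⊢ <;> simp [this]
      · intro hb v' hv' u' hu' he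
        rcases Sym2.eq_iff.mp he with ⟨h1, h2⟩ | ⟨h1, h2⟩
        · rw [← h1, ← h2]
          by_cases hm : u ∈ F v <;> simp [hm] at hb ⊢ <;> simp [hb]
        · exact absurd (h1 ▸ hu) (hdisj v' hv')
    rw [htv]
    split_ifs with hm
    · exact ber_true hP
    · exact ber_false hP
  rw [Finset.prod_congr rfl hinner, Finset.prod_ite, Finset.prod_const, Finset.prod_const]
  have hfilt : Uu.filter (fun u => u ∈ F v) = F v := by
    ext u
    simp only [Finset.mem_filter, and_iff_right_iff_imp]
    exact fun hu => hF v hu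
  have hfilt2 : (Uu.filter (fun u => u ∉ F v)).card = Uu.card - (F v).card := by
    rw [Finset.filter_not, Finset.card_sdiff_of_subset]
    · rw [hfilt]
    · rw [hfilt]; exact hF v
  rw [hfilt, hfilt2]

lemma inter_bad_le {n : ℕ} (r : ℕ) {P : NNReal} (hP : P ≤ 1) (S Uu : Finset (Fin n))
    (hdisj : ∀ v ∈ S, v ∉ Uu) :
    (Measure.pi fun _ : Sym2 (Fin n) => (PMF.bernoulli P hP).toMeasure)
      {ω | ∀ v ∈ S, (Uu.filter fun u => ω s(u, v) = true).card < r} ≤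
    (∑ A ∈ Uu.powerset.filter fun A => A.card < r,
        P ^ A.card * (1 - P) ^ (Uu.card - A.card) : ℝ≥0∞) ^ S.card := by
  classical
  set μ := Measure.pi fun _ : Sym2 (Fin n) => (PMF.bernoulli P hP).toMeasure with hμ
  set filt := Uu.powerset.filter fun A => A.card < r with hfilt
  set Pb := S.pi fun _ => filt with hPb
  set Fext : (∀ v ∈ S, Finset (Fin n)) → Fin n → Finset (Fin n) :=
    fun f v => if h : v ∈ S then f v h else ∅ with hFext
  have hFsub : ∀ f ∈ Pb, ∀ v, Fext f v ⊆ Uu := by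
    intro f hf v
    by_cases h : v ∈ S
    · simp only [hFext, dif_pos h]
      have := Finset.mem_pi.mp hf v h
      exact Finset.mem_powerset.mp (Finset.mem_filter.mp this).1
    · simp only [hFext, dif_neg h]
      exact Finset.empty_subset _
  have hsub : {ω : Sym2 (Fin n) → Bool | ∀ v ∈ S, (Uu.filter fun u => ω s(u, v) = true).card < r}
      ⊆ ⋃ f ∈ Pb, {ω | ∀ v ∈ S, ∀ u ∈ Uu, (ω s(u, v) = true ↔ u ∈ Fext f v)} := by
    intro ω hω
    have hmem : (fun v _ => Uu.filter fun u => ω s(u, v) = true) ∈ Pb := by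
      refine Finset.mem_pi.mpr fun v hv => ?_
      exact Finset.mem_filter.mpr ⟨Finset.mem_powerset.mpr (Finset.filter_subset _ _), hω v hv⟩
    refine Set.mem_iUnion.mpr ⟨(fun v _ => Uu.filter fun u => ω s(u, v) = true), ?_⟩
    refine Set.mem_iUnion.mpr ⟨hmem, ?_⟩
    intro v hv u hu
    simp only [hFext, dif_pos hv, Finset.mem_filter]
    exact ⟨fun h => ⟨hu, h⟩, fun h => h.2⟩
  calc μ _ ≤ μ (⋃ f ∈ Pb, {ω | ∀ v ∈ S, ∀ u ∈ Uu, (ω s(u, v) = true ↔ u ∈ Fext f v)}) :=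
        measure_mono hsub
    _ ≤ ∑ f ∈ Pb, μ {ω | ∀ v ∈ S, ∀ u ∈ Uu, (ω s(u, v) = true ↔ u ∈ Fext f v)} :=
        measure_biUnion_finset_le _ _
    _ = (∑ f ∈ Pb, ∏ v ∈ S, P ^ (Fext f v).card * (1 - P) ^ (Uu.card - (Fext f v).card) : ℝ≥0∞) := by
        refine Finset.sum_congr rfl fun f hf => ?_
        exact cyl_measure hP S Uu hdisj (Fext f) (hFsub f hf)
    _ = (∑ f ∈ Pb, ∏ x ∈ S.attach,
          P ^ (f x.1 x.2).card * (1 - P) ^ (Uu.card - (f x.1 x.2).card) : ℝ≥0∞) := by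
        refine Finset.sum_congr rfl fun f hf => ?_
        rw [← Finset.prod_attach S (fun v => (P : ℝ≥0∞) ^ (Fext f v).card * (1 - (P : ℝ≥0∞)) ^ (Uu.card - (Fext f v).card))]
        refine Finset.prod_congr rfl fun x _ => ?_
        simp only [hFext, dif_pos x.2]
    _ = (∏ v ∈ S, ∑ A ∈ filt, P ^ A.card * (1 - P) ^ (Uu.card - A.card) : ℝ≥0∞) :=
        (Finset.prod_sum S (fun _ => filt) (fun _ A => (P : ℝ≥0∞) ^ A.card * (1 - (P : ℝ≥0∞)) ^ (Uu.card - A.card))).symm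
    _ = _ := by rw [Finset.prod_const]

lemma main_bound {n : ℕ} (r k : ℕ) {P : NNReal} (hP : P ≤ 1) (Uu Ww : Finset (Fin n)) :
    (Measure.pi fun _ : Sym2 (Fin n) => (PMF.bernoulli P hP).toMeasure)
      {ω | k ≤ (Finset.univ.filter fun v : Fin n => v ∉ Uu ∧ v ∉ Ww ∧
          ((Uu.filter fun u => ω s(u, v) = true).card < r)).card} ≤
    (n.choose k : ℝ≥0∞) * (∑ A ∈ Uu.powerset.filter fun A => A.card < r,
        P ^ A.card * (1 - P) ^ (Uu.card - A.card) : ℝ≥0∞) ^ k := by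
  classical
  set μ := Measure.pi fun _ : Sym2 (Fin n) => (PMF.bernoulli P hP).toMeasure with hμ
  set q : ℝ≥0∞ := ∑ A ∈ Uu.powerset.filter fun A => A.card < r,
      P ^ A.card * (1 - P) ^ (Uu.card - A.card) with hq
  set 𝒮 := (Finset.univ.filter fun v : Fin n => v ∉ Uu).powersetCard k with h𝒮
  have hsub : {ω : Sym2 (Fin n) → Bool | k ≤ (Finset.univ.filter fun v : Fin n => v ∉ Uu ∧ v ∉ Ww ∧
          ((Uu.filter fun u => ω s(u, v) = true).card < r)).card}
      ⊆ ⋃ S ∈ 𝒮, {ω | ∀ v ∈ S, (Uu.filter fun u => ω s(u, v) = true).card < r} := by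
    intro ω hω
    obtain ⟨S, hSsub, hScard⟩ := Finset.exists_subset_card_eq hω
    have hmem : S ∈ 𝒮 := by
      refine Finset.mem_powersetCard.mpr ⟨fun v hv => ?_, hScard⟩
      have := Finset.mem_filter.mp (hSsub hv)
      exact Finset.mem_filter.mpr ⟨Finset.mem_univ _, this.2.1⟩
    refine Set.mem_iUnion.mpr ⟨S, Set.mem_iUnion.mpr ⟨hmem, ?_⟩⟩
    intro v hv
    exact (Finset.mem_filter.mp (hSsub hv)).2.2.2
  calc μ _ ≤ μ (⋃ S ∈ 𝒮, {ω | ∀ v ∈ S, (Uu.filter fun u => ω s(u, v) = true).card < r}) :=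
        measure_mono hsub
    _ ≤ ∑ S ∈ 𝒮, μ {ω | ∀ v ∈ S, (Uu.filter fun u => ω s(u, v) = true).card < r} :=
        measure_biUnion_finset_le _ _
    _ ≤ ∑ S ∈ 𝒮, q ^ k := by
        refine Finset.sum_le_sum fun S hS => ?_
        obtain ⟨hSsub, hScard⟩ := Finset.mem_powersetCard.mp hS
        have hdisj : ∀ v ∈ S, v ∉ Uu := fun v hv => (Finset.mem_filter.mp (hSsub hv)).2
        simpa [hScard] using inter_bad_le r hP S Uu hdisj
    _ = (𝒮.card : ℝ≥0∞) * q ^ k := by rw [Finset.sum_const, nsmul_eq_mul]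
    _ ≤ (n.choose k : ℝ≥0∞) * q ^ k := by
        refine mul_le_mul_left ?_ _
        rw [h𝒮, Finset.card_powersetCard]
        refine Nat.cast_le.mpr (Nat.choose_le_choose k ?_)
        exact (Finset.card_filter_le _ _).trans (by simp)

lemma qbound {n : ℕ} (r : ℕ) (hr : 1 ≤ r) (Uu : Finset (Fin n)) (pn : ℝ)
    (h0 : 0 ≤ pn) (h1 : pn ≤ 1) (hm : r ≤ Uu.card) (hmp : 1 ≤ Uu.card * pn) :
    ∑ A ∈ Uu.powerset.filter (fun A => A.card < r), pn ^ A.card * (1 - pn) ^ (Uu.card - A.card)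
    ≤ r * (Uu.card * pn) ^ (r - 1) * (1 - pn) ^ (Uu.card - r + 1) := by
  classical
  set m := Uu.card with hmm
  have hgroup : Uu.powerset.filter (fun A => A.card < r)
      = (Finset.range r).biUnion (fun j => Uu.powersetCard j) := by
    ext A
    simp only [Finset.mem_filter, Finset.mem_powerset, Finset.mem_biUnion, Finset.mem_range,
      Finset.mem_powersetCard]
    constructor
    · rintro ⟨h1, h2⟩; exact ⟨A.card, h2, h1, rfl⟩
    · rintro ⟨j, hj, h1, h2⟩; exact ⟨h1, h2 ▸ hj⟩
  rw [hgroup, Finset.sum_biUnion ?hdisj]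
  case hdisj =>
    intro i _ j _ hij
    refine Finset.disjoint_left.mpr fun A hAi hAj => hij ?_
    rw [← (Finset.mem_powersetCard.mp hAi).2, ← (Finset.mem_powersetCard.mp hAj).2]
  have hterm : ∀ j ∈ Finset.range r,
      ∑ A ∈ Uu.powersetCard j, pn ^ A.card * (1 - pn) ^ (m - A.card)
      ≤ (m * pn) ^ (r - 1) * (1 - pn) ^ (m - r + 1) := by
    intro j hj
    have hj' : j ≤ r - 1 := Nat.le_sub_one_of_lt (Finset.mem_range.mp hj)
    have hsum : ∑ A ∈ Uu.powersetCard j, pn ^ A.card * (1 - pn) ^ (m - A.card)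
        = (m.choose j : ℝ) * (pn ^ j * (1 - pn) ^ (m - j)) := by
      rw [Finset.sum_congr rfl (fun A hA => by
        rw [(Finset.mem_powersetCard.mp hA).2]), Finset.sum_const,
        Finset.card_powersetCard, nsmul_eq_mul]
    rw [hsum]
    have h1p : (0:ℝ) ≤ 1 - pn := by linarith
    calc (m.choose j : ℝ) * (pn ^ j * (1 - pn) ^ (m - j))
        ≤ (m:ℝ) ^ j * (pn ^ j * (1 - pn) ^ (m - r + 1)) := by
          refine mul_le_mul ?_ ?_ (by positivity) (by positivity)
          · exact_mod_cast Nat.choose_le_pow m j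
          · refine mul_le_mul_of_nonneg_left ?_ (by positivity)
            exact pow_le_pow_of_le_one h1p (by linarith) (by omega)
      _ = ((m:ℝ) * pn) ^ j * (1 - pn) ^ (m - r + 1) := by rw [mul_pow]; ring
      _ ≤ ((m:ℝ) * pn) ^ (r - 1) * (1 - pn) ^ (m - r + 1) := by
          refine mul_le_mul_of_nonneg_right ?_ (by positivity)
          exact pow_le_pow_right₀ hmp hj'
  calc ∑ j ∈ Finset.range r, ∑ A ∈ Uu.powersetCard j, pn ^ A.card * (1 - pn) ^ (m - A.card)
      ≤ ∑ _j ∈ Finset.range r, (m * pn) ^ (r - 1) * (1 - pn) ^ (m - r + 1) :=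
        Finset.sum_le_sum hterm
    _ = r * (m * pn) ^ (r - 1) * (1 - pn) ^ (m - r + 1) := by
        rw [Finset.sum_const, Finset.card_range, nsmul_eq_mul]; ring

/-- In `G(n,p)` (modelled by independent Bernoulli(p) labels on the unordered pairs of `[n]`),
with `|U| = ⌊n/(2^r r! √e)⌋` and `np → ∞`, with probability at least `1 - exp(-Ω(p⁻¹))` at
most `p⁻¹` vertices of `[n] \ (U ∪ W)` have fewer than `r` neighbours in `U`. -/
theorem few_uninfected (r : ℕ) (hr : 2 ≤ r) (p : ℕ → ℝ) (hp : ∀ n, p n ∈ Set.Ioo (0 : ℝ) 1)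
    (hnp : Tendsto (fun n : ℕ => n * p n) atTop atTop)
    (hp0 : Tendsto p atTop (nhds 0))
    (U W : ∀ n : ℕ, Finset (Fin n))
    (hU : ∀ n, (U n).card = ⌊(n : ℝ) / (2 ^ r * r.factorial * Real.sqrt (Real.exp 1))⌋₊) :
    ∃ c : ℝ, 0 < c ∧ ∀ᶠ n : ℕ in atTop,
      1 - Real.exp (-c * (p n)⁻¹) ≤
        ((Measure.pi fun _ : Sym2 (Fin n) =>
            (PMF.bernoulli (Real.toNNReal (p n))
              (Real.toNNReal_le_one.mpr (hp n).2.le)).toMeasure)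
          {ω | ((Finset.univ.filter fun v : Fin n => v ∉ U n ∧ v ∉ W n ∧
                ((U n).filter fun u => ω s(u, v) = true).card < r).card : ℝ) ≤
              (p n)⁻¹}).toReal := by
  classical
  refine ⟨1, one_pos, ?_⟩
  set C : ℝ := 2 ^ r * r.factorial * Real.sqrt (Real.exp 1) with hCdef
  have hC1 : 1 ≤ C := by
    have ha : (1:ℝ) ≤ 2 ^ r := one_le_pow₀ one_le_two
    have hb : (1:ℝ) ≤ r.factorial := by exact_mod_cast r.factorial_pos
    have hc : (1:ℝ) ≤ Real.sqrt (Real.exp 1) := by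
      have h := Real.sqrt_le_sqrt (show (1:ℝ) ≤ Real.exp 1 by linarith [Real.add_one_le_exp 1])
      rwa [Real.sqrt_one] at h
    calc (1:ℝ) = 1 * 1 * 1 := by ring
      _ ≤ 2 ^ r * ↑r.factorial * Real.sqrt (Real.exp 1) := by
          refine mul_le_mul (mul_le_mul ha hb zero_le_one (by positivity)) hc zero_le_one
            (by positivity)
  have hC0 : (0:ℝ) < C := lt_of_lt_of_le one_pos hC1
  have hnR : Tendsto (fun n : ℕ => (n:ℝ)) atTop atTop := tendsto_natCast_atTop_atTop
  have hdiv : Tendsto (fun n : ℕ => (n:ℝ) * p n / C) atTop atTop := hnp.atTop_div_const hC0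
  have hG0 : Tendsto (fun n : ℕ => ((n:ℝ) * p n / C) ^ r * Real.exp (-((n:ℝ) * p n / C)))
      atTop (nhds 0) := (tendsto_pow_mul_exp_neg_atTop_nhds_zero r).comp hdiv
  have hG : Tendsto (fun n : ℕ => ((r:ℝ) * Real.exp (r+1) * C ^ r) *
      (((n:ℝ) * p n / C) ^ r * Real.exp (-((n:ℝ) * p n / C)))) atTop (nhds 0) := by
    simpa using hG0.const_mul ((r:ℝ) * Real.exp (r+1) * C ^ r)
  have hGev : ∀ᶠ n : ℕ in atTop, ((r:ℝ) * Real.exp (r+1) * C ^ r) *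
      (((n:ℝ) * p n / C) ^ r * Real.exp (-((n:ℝ) * p n / C))) < Real.exp (-1) :=
    hG.eventually_lt_const (Real.exp_pos _)
  filter_upwards [hGev, hnp.eventually_ge_atTop (2*C),
    hnR.eventually_ge_atTop ((r:ℝ) * C)] with n hGn hnp2C hnrC
  obtain ⟨hpn0, hpn1⟩ := hp n
  set pn := p n with hpn
  set m := (U n).card with hm
  set k := ⌊pn⁻¹⌋₊ + 1 with hk
  set x := (n:ℝ) * pn with hx
  have hx0 : (0:ℝ) ≤ x := by positivity
  have hUn : m = ⌊(n:ℝ)/C⌋₊ := hU n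
  have hmfloor : (n:ℝ)/C - 1 ≤ (m:ℝ) := by
    have h := Nat.lt_floor_add_one ((n:ℝ)/C)
    rw [← hUn] at h
    push_cast at h
    linarith
  have hmlen : (m:ℝ) ≤ (n:ℝ) := by
    have : m ≤ n := by simpa using Finset.card_le_univ (U n)
    exact_mod_cast this
  have hmr : r ≤ m := by
    rw [hUn]
    refine Nat.le_floor ?_
    rw [le_div_iff₀ hC0]
    exact hnrC
  have hmp1 : (1:ℝ) ≤ (m:ℝ) * pn := by
    have h1 : ((n:ℝ)/C - 1) * pn ≤ (m:ℝ) * pn := mul_le_mul_of_nonneg_right hmfloor hpn0.le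
    have h2 : (2:ℝ) ≤ x / C := by rw [le_div_iff₀ hC0]; linarith
    have h3 : ((n:ℝ)/C) * pn = x / C := by rw [hx]; ring
    nlinarith
  -- real q and its bound
  set q := ∑ A ∈ (U n).powerset.filter (fun A => A.card < r),
      pn ^ A.card * (1 - pn) ^ (m - A.card) with hq
  have hq0 : 0 ≤ q := by
    refine Finset.sum_nonneg fun A _ => ?_
    have : (0:ℝ) ≤ 1 - pn := by linarith
    positivity
  have hq_le : q ≤ r * ((m:ℝ) * pn) ^ (r - 1) * (1 - pn) ^ (m - r + 1) :=
    qbound r (le_trans one_le_two hr) (U n) pn hpn0.le hpn1.le hmr hmp1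
  -- key exponential bound
  have hexp_b : (1 - pn) ^ (m - r + 1) ≤ Real.exp ((r:ℝ) - x/C) := by
    calc (1 - pn) ^ (m - r + 1) ≤ Real.exp (-pn) ^ (m - r + 1) := by
          refine pow_le_pow_left₀ (by linarith) ?_ _
          linarith [Real.add_one_le_exp (-pn)]
      _ = Real.exp (-(pn * ((m - r + 1 : ℕ):ℝ))) := by rw [← Real.exp_nat_mul]; congr 1; ring
      _ ≤ Real.exp ((r:ℝ) - x/C) := by
          apply Real.exp_le_exp.mpr
          have hcast : ((m - r + 1 : ℕ):ℝ) = (m:ℝ) - r + 1 := by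
            push_cast [hmr]; ring
          rw [hcast]
          have h6 : pn * ((n:ℝ)/C - (r:ℝ)) ≤ pn * ((m:ℝ) - r + 1) :=
            mul_le_mul_of_nonneg_left (by linarith) hpn0.le
          have h7 : x/C - r ≤ pn * ((n:ℝ)/C - r) := by
            have h8 : pn * ((n:ℝ)/C) = x / C := by rw [hx]; ring
            have h9 : pn * (r:ℝ) ≤ (r:ℝ) := by nlinarith [Nat.cast_nonneg (α := ℝ) r]
            nlinarith
          linarith
  have key : (Real.exp 1 * x) * q ≤ Real.exp (-1) := by
    have hmpn0 : (0:ℝ) ≤ (m:ℝ) * pn := by positivity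
    calc (Real.exp 1 * x) * q
        ≤ (Real.exp 1 * x) * ((r:ℝ) * ((m:ℝ) * pn) ^ (r - 1) * (1 - pn) ^ (m - r + 1)) :=
          mul_le_mul_of_nonneg_left hq_le (by positivity)
      _ ≤ (Real.exp 1 * x) * ((r:ℝ) * x ^ (r - 1) * Real.exp ((r:ℝ) - x/C)) := by
          refine mul_le_mul_of_nonneg_left ?_ (by positivity)
          have h1p : (0:ℝ) ≤ 1 - pn := by linarith
          refine mul_le_mul ?_ hexp_b (by positivity) (by positivity)
          refine mul_le_mul_of_nonneg_left ?_ (by positivity)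
          exact pow_le_pow_left₀ hmpn0 (by nlinarith) _
      _ = ((r:ℝ) * Real.exp (r+1) * C ^ r) * ((x / C) ^ r * Real.exp (-(x/C))) := by
          have h8 : Real.exp ((r:ℝ) - x/C) = Real.exp r * Real.exp (-(x/C)) := by
            rw [← Real.exp_add]; ring_nf
          have h9 : Real.exp 1 * Real.exp (r:ℝ) = Real.exp ((r:ℝ)+1) := by
            rw [← Real.exp_add]; ring_nf
          have h10 : x * x ^ (r-1) = x ^ r := by
            rw [← pow_succ']; congr 1; omega
          have hR : ((r:ℝ) * Real.exp ((r:ℝ)+1) * C ^ r) * ((x / C) ^ r * Real.exp (-(x/C)))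
              = (r:ℝ) * Real.exp ((r:ℝ)+1) * (x^r * Real.exp (-(x/C))) := by
            rw [div_pow]
            have hCr : (C:ℝ)^r ≠ 0 := by positivity
            field_simp
          rw [hR, ← h9, ← h10, h8]
          ring
      _ ≤ Real.exp (-1) := hGn.le
  -- numeric chain
  have hk1 : (1:ℕ) ≤ k := by omega
  have hkR : pn⁻¹ ≤ (k:ℝ) := by
    have := (Nat.lt_floor_add_one pn⁻¹).le
    rw [hk]; push_cast; linarith
  have hkpos : (0:ℝ) < (k:ℝ) := lt_of_lt_of_le (inv_pos.mpr hpn0) hkR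
  have hinvk : (1:ℝ)/(k:ℝ) ≤ pn := by
    rw [div_le_iff₀ hkpos]
    have h14 := mul_le_mul_of_nonneg_left hkR hpn0.le
    rw [mul_inv_cancel₀ (ne_of_gt hpn0)] at h14
    linarith
  have hfact : ((k:ℝ))^k / Real.exp 1 ^ k ≤ (k.factorial : ℝ) := by
    have h12 : ((k:ℝ))^k / k.factorial ≤ Real.exp (k:ℝ) := by
      refine le_trans ?_ (Real.sum_le_exp_of_nonneg (by positivity) (k+1))
      exact Finset.single_le_sum (f := fun i => (k:ℝ)^i / i.factorial)
        (fun i _ => by positivity) (Finset.self_mem_range_succ k)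
    have h13 : Real.exp ((k:ℕ):ℝ) = Real.exp 1 ^ k := by
      rw [← Real.exp_nat_mul]; norm_num
    have hfp : (0:ℝ) < (k.factorial:ℝ) := by exact_mod_cast k.factorial_pos
    rw [div_le_iff₀ hfp] at h12
    rw [div_le_iff₀ (by positivity)]
    calc ((k:ℝ))^k ≤ Real.exp (k:ℝ) * k.factorial := h12
      _ = (k.factorial:ℝ) * Real.exp 1 ^ k := by rw [h13]; ring
  have hreal : ((n.choose k : ℕ) : ℝ) * q ^ k ≤ Real.exp (-pn⁻¹) := by
    calc ((n.choose k : ℕ) : ℝ) * q ^ k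
        ≤ ((n:ℝ)^k / k.factorial) * q ^ k :=
          mul_le_mul_of_nonneg_right (Nat.choose_le_pow_div k n) (by positivity)
      _ ≤ (((n:ℝ) * q * Real.exp 1) / (k:ℝ))^k := by
          rw [div_pow, mul_pow, mul_pow, div_mul_eq_mul_div]
          rw [div_le_div_iff₀ (by positivity) (by positivity)]
          rw [div_le_iff₀ (by positivity)] at hfact
          calc (n:ℝ)^k * q^k * (k:ℝ)^k ≤ (n:ℝ)^k * q^k * ((k.factorial:ℝ) * Real.exp 1 ^ k) :=
                mul_le_mul_of_nonneg_left hfact (by positivity)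
            _ = (n:ℝ)^k * q^k * Real.exp 1 ^ k * (k.factorial:ℝ) := by ring
      _ ≤ (Real.exp 1 * x * q)^k := by
          refine pow_le_pow_left₀ (by positivity) ?_ _
          rw [div_eq_mul_one_div]
          calc (n:ℝ) * q * Real.exp 1 * (1/(k:ℝ)) ≤ (n:ℝ) * q * Real.exp 1 * pn :=
                mul_le_mul_of_nonneg_left hinvk (by positivity)
            _ = Real.exp 1 * x * q := by rw [hx]; ring
      _ ≤ Real.exp (-1) ^ k := pow_le_pow_left₀ (by positivity) key k
      _ = Real.exp (-(k:ℝ)) := by rw [← Real.exp_nat_mul]; congr 1; ring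
      _ ≤ Real.exp (-pn⁻¹) := Real.exp_le_exp.mpr (by linarith)
  -- measure part
  set P : NNReal := Real.toNNReal pn with hP
  have hPle : P ≤ 1 := Real.toNNReal_le_one.mpr hpn1.le
  set μ := Measure.pi fun _ : Sym2 (Fin n) => (PMF.bernoulli P hPle).toMeasure with hμ
  set E := {ω : Sym2 (Fin n) → Bool | ((Finset.univ.filter fun v : Fin n => v ∉ U n ∧ v ∉ W n ∧
      ((U n).filter fun u => ω s(u, v) = true).card < r).card : ℝ) ≤ pn⁻¹} with hE
  have hcompl : Eᶜ = {ω : Sym2 (Fin n) → Bool | k ≤ (Finset.univ.filter fun v : Fin n =>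
      v ∉ U n ∧ v ∉ W n ∧ ((U n).filter fun u => ω s(u, v) = true).card < r).card} := by
    ext ω
    simp only [hE, Set.mem_compl_iff, Set.mem_setOf_eq, not_le, hk]
    rw [Nat.add_one_le_iff, Nat.floor_lt (inv_nonneg.mpr hpn0.le)]
  have hQof : (∑ A ∈ (U n).powerset.filter (fun A => A.card < r),
      P ^ A.card * (1 - P) ^ (m - A.card) : ℝ≥0∞) = ENNReal.ofReal q := by
    have hPc : (P : ℝ≥0∞) = ENNReal.ofReal pn := rfl
    rw [hPc, hq, ENNReal.ofReal_sum_of_nonneg]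
    · refine Finset.sum_congr rfl fun A _ => ?_
      have h1P : (1 : ℝ≥0∞) - ENNReal.ofReal pn = ENNReal.ofReal (1 - pn) := by
        rw [ENNReal.ofReal_sub 1 hpn0.le, ENNReal.ofReal_one]
      rw [h1P, ← ENNReal.ofReal_pow hpn0.le, ← ENNReal.ofReal_pow (by linarith),
        ← ENNReal.ofReal_mul (by positivity)]
    · intro A _
      have : (0:ℝ) ≤ 1 - pn := by linarith
      positivity
  have hmb := main_bound (n := n) r k hPle (U n) (W n)
  rw [← hcompl] at hmb
  have hbound : μ Eᶜ ≤ ENNReal.ofReal (Real.exp (-pn⁻¹)) := by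
    refine le_trans hmb ?_
    rw [hQof, ← ENNReal.ofReal_natCast (n.choose k), ← ENNReal.ofReal_pow hq0,
      ← ENNReal.ofReal_mul (by positivity)]
    exact ENNReal.ofReal_le_ofReal hreal
  have hEmeas : MeasurableSet E := (Set.toFinite E).measurableSet
  have hprob : IsProbabilityMeasure μ := by infer_instance
  have hsum : μ E + μ Eᶜ = 1 := by
    rw [measure_add_measure_compl hEmeas]
    exact measure_univ
  have hfin1 : μ E ≠ ⊤ := measure_ne_top μ E
  have hfin2 : μ Eᶜ ≠ ⊤ := measure_ne_top μ Eᶜ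
  have htoReal : (μ E).toReal + (μ Eᶜ).toReal = 1 := by
    rw [← ENNReal.toReal_add hfin1 hfin2, hsum]; rfl
  have hEc : (μ Eᶜ).toReal ≤ Real.exp (-pn⁻¹) :=
    ENNReal.toReal_le_of_le_ofReal (Real.exp_pos _).le hbound
  have hgoal : 1 - Real.exp (-1 * pn⁻¹) ≤ (μ E).toReal := by
    have : (-1 : ℝ) * pn⁻¹ = -pn⁻¹ := by ring
    rw [this]
    linarith
  exact hgoal
end

section
/- For c > 1, the equation 1 - ρ = e^{-cρ} has a unique solution ρ in the open interval (0,1). -/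
open Real

/-- Strict convexity argument: two interior solutions coincide. -/
lemma rho_unique_aux (c : ℝ) (hc : 1 < c) {ρ₁ ρ₂ : ℝ}
    (h1 : ρ₁ ∈ Set.Ioo (0 : ℝ) 1) (h2 : ρ₂ ∈ Set.Ioo (0 : ℝ) 1)
    (e1 : 1 - ρ₁ = Real.exp (-(c * ρ₁))) (e2 : 1 - ρ₂ = Real.exp (-(c * ρ₂)))
    (hlt : ρ₁ < ρ₂) : False := by
  have hc0 : (0 : ℝ) < c := lt_trans one_pos hc
  have hρ₂0 : (0 : ℝ) < ρ₂ := h2.1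
  set b : ℝ := ρ₁ / ρ₂ with hb
  set a : ℝ := 1 - b with ha
  have hb0 : 0 < b := div_pos h1.1 hρ₂0
  have hb1 : b < 1 := (div_lt_one hρ₂0).mpr hlt
  have ha0 : 0 < a := by simp [ha]; linarith
  have hab : a + b = 1 := by simp [ha]
  have hne : (0 : ℝ) ≠ -(c * ρ₂) := by nlinarith
  have key := strictConvexOn_exp.2 (Set.mem_univ 0) (Set.mem_univ (-(c * ρ₂)))
    hne ha0 hb0 hab
  have hlhs : a • (0 : ℝ) + b • (-(c * ρ₂)) = -(c * ρ₁) := by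
    simp only [smul_eq_mul, mul_zero, zero_add]; rw [hb, div_mul_eq_mul_div, div_eq_iff hρ₂0.ne']; ring
  have hrhs : a • Real.exp 0 + b • Real.exp (-(c * ρ₂)) = 1 - ρ₁ := by
    rw [Real.exp_zero, ← e2]
    have : b * ρ₂ = ρ₁ := by rw [hb, div_mul_cancel₀ _ hρ₂0.ne']
    simp [ha, smul_eq_mul]
    nlinarith
  rw [hlhs, hrhs, ← e1] at key
  exact lt_irrefl _ key

/-- For `c > 1`, the equation `1 - ρ = exp(-cρ)` has a unique solution `ρ ∈ (0,1)`. -/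
theorem exists_unique_rho (c : ℝ) (hc : 1 < c) :
    ∃! ρ : ℝ, ρ ∈ Set.Ioo (0 : ℝ) 1 ∧ 1 - ρ = Real.exp (-(c * ρ)) := by
  have hc0 : (0 : ℝ) < c := lt_trans one_pos hc
  set ρ₀ : ℝ := (c - 1) / (2 * c) with hρ₀
  have hρ₀0 : 0 < ρ₀ := div_pos (by linarith) (by linarith)
  have hρ₀1 : ρ₀ < 1 := by
    rw [hρ₀, div_lt_one (by positivity)]; linarith
  -- g ρ = exp(-(c*ρ)) - (1 - ρ)
  set g : ℝ → ℝ := fun ρ => Real.exp (-(c * ρ)) - (1 - ρ) with hg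
  have hgcont : ContinuousOn g (Set.Icc ρ₀ 1) := by
    apply Continuous.continuousOn
    continuity
  have hg0 : g ρ₀ < 0 := by
    have h1 : 1 + c * ρ₀ < Real.exp (c * ρ₀) := by
      have := Real.add_one_lt_exp (x := c * ρ₀) (by positivity)
      linarith
    have hexp : Real.exp (-(c * ρ₀)) < 1 / (1 + c * ρ₀) := by
      rw [Real.exp_neg, inv_eq_one_div]
      exact one_div_lt_one_div_of_lt (by positivity) h1
    have hkey : 1 / (1 + c * ρ₀) < 1 - ρ₀ := by
      rw [div_lt_iff₀ (by positivity)]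
      have hcr : c * ρ₀ = (c - 1) / 2 := by
        rw [hρ₀]; field_simp
      nlinarith [hρ₀0, hρ₀1]
    simp only [hg]
    linarith
  have hg1 : 0 < g 1 := by
    simp only [hg, mul_one]
    have := Real.exp_pos (-c)
    linarith
  have hiv := intermediate_value_Ioo (le_of_lt hρ₀1) hgcont
  obtain ⟨ρ, hρmem, hρeq⟩ := hiv ⟨hg0, hg1⟩
  have hmem : ρ ∈ Set.Ioo (0 : ℝ) 1 := ⟨lt_trans hρ₀0 hρmem.1, hρmem.2⟩
  have heq : 1 - ρ = Real.exp (-(c * ρ)) := by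
    have : Real.exp (-(c * ρ)) - (1 - ρ) = 0 := hρeq
    linarith
  refine ⟨ρ, ⟨hmem, heq⟩, ?_⟩
  rintro ρ' ⟨hmem', heq'⟩
  rcases lt_trichotomy ρ' ρ with h | h | h
  · exact absurd (rho_unique_aux c hc hmem' hmem heq' heq h) id
  · exact h
  · exact absurd (rho_unique_aux c hc hmem hmem' heq heq' h) id
end
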